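/- On h(n) the following commutation relations hold: Fₙ ∘ j(n) = j(n) ∘ Fₙ, Fₙ ∘ b(n) = b(n) ∘ Fₙ, and (j(n) ∘ Fₙ) ∘ t(n) = t(n) ∘ (j(n) ∘ Fₙ). -/

import Mathlib

noncomputable section

abbrev SL2Z := Matrix.SpecialLinearGroup (Fin 2) ℤ

def Lmat : SL2Z := ⟨!![1, 1; 0, 1], by decide⟩
def Rmat : SL2Z := ⟨!![1, 0; 1, 1], by decide⟩
def Jmat : SL2Z := ⟨!![0, 1; -1, 0], by decide⟩
def Imat : SL2Z := ⟨!![-1, 0; 0, -1], by decide⟩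

/-- h(n): the complex functions on (ℤ/nℤ)². -/
abbrev hSp (n : ℕ) := (Fin 2 → ZMod n) → ℂ

/-- Reduction of SL(2,ℤ) mod n. -/
def redMap (n : ℕ) : SL2Z →* Matrix.SpecialLinearGroup (Fin 2) (ZMod n) :=
  Matrix.SpecialLinearGroup.map (Int.castRingHom (ZMod n))

/-- The permutation representation of SL(2,ℤ) on h(n): (ρₙ(g)f)(x) = f(g⁻¹x). -/
def repN (n : ℕ) (g : SL2Z) : Module.End ℂ (hSp n) :=
  LinearMap.funLeft ℂ ℂ (fun x =>
    Matrix.mulVec ((redMap n g⁻¹) : Matrix (Fin 2) (Fin 2) (ZMod n)) x)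

/-- t(n) = (𝐥 + 𝐫)/2. -/
def tOp (n : ℕ) : Module.End ℂ (hSp n) := (2 : ℂ)⁻¹ • (repN n Lmat + repN n Rmat)

/-- j(n) = ρₙ(J). -/
def jOp (n : ℕ) : Module.End ℂ (hSp n) := repN n Jmat

/-- b(n) = (1/3)(𝐢 − 𝐫⁻¹𝐥 − 𝐥⁻¹𝐫 − 𝐥𝐫⁻¹ − 𝐫𝐥⁻¹). -/
def bOp (n : ℕ) : Module.End ℂ (hSp n) :=
  (3 : ℂ)⁻¹ • (repN n Imat - repN n Rmat⁻¹ * repN n Lmat - repN n Lmat⁻¹ * repN n Rmat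
    - repN n Lmat * repN n Rmat⁻¹ - repN n Rmat * repN n Lmat⁻¹)

/-- The unitary Fourier transform Fₙ on h(n):
(Fₙf)(ℓ) = n⁻¹ Σ_k exp(−2πi(k₁ℓ₁ + k₂ℓ₂)/n) f(k), using integer lifts. -/
def fourOp (n : ℕ) [NeZero n] : Module.End ℂ (hSp n) :=
  Matrix.mulVecLin (Matrix.of fun ℓ k : Fin 2 → ZMod n =>
    (n : ℂ)⁻¹ * Complex.exp (-(2 * Real.pi * Complex.I) *
      (((k 0).val * (ℓ 0).val + (k 1).val * (ℓ 1).val : ℕ) : ℂ) / (n : ℂ)))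

/-! ### Auxiliary material -/

/-- Explicit inverse of `Lmat`. -/
def Lmat' : SL2Z := ⟨!![1, -1; 0, 1], by decide⟩
/-- Explicit inverse of `Rmat`. -/
def Rmat' : SL2Z := ⟨!![1, 0; -1, 1], by decide⟩

lemma Lmat_inv : Lmat⁻¹ = Lmat' :=
  inv_eq_of_mul_eq_one_right (Subtype.ext (by simp [Lmat, Lmat'] <;> decide))

lemma Rmat_inv : Rmat⁻¹ = Rmat' :=
  inv_eq_of_mul_eq_one_right (Subtype.ext (by simp [Rmat, Rmat'] <;> decide))

/-- `repN` is multiplicative. -/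
lemma repN_mul (n : ℕ) (g h : SL2Z) : repN n (g * h) = repN n g * repN n h := by
  refine LinearMap.ext fun f => funext fun x => ?_
  simp [repN, LinearMap.funLeft_apply, Module.End.mul_apply, mul_inv_rev, map_mul,
    Matrix.SpecialLinearGroup.coe_mul, Matrix.mulVec_mulVec]
  congr 1
  ext i
  fin_cases i <;> simp [Matrix.mul_apply, Fin.sum_univ_two] <;> ring

/-- Helper: `exp(-2πi (nq+r)/n) = exp(-2πi r/n)`. -/
lemma exp_helper (n q r : ℕ) (hn : (n : ℂ) ≠ 0) :
    Complex.exp (-(2 * Real.pi * Complex.I) * ((n * q + r : ℕ) : ℂ) / (n : ℂ)) =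
      Complex.exp (-(2 * Real.pi * Complex.I) * ((r : ℕ) : ℂ) / (n : ℂ)) := by
  have key : -(2 * Real.pi * Complex.I) * ((n * q + r : ℕ) : ℂ) / (n : ℂ) =
      ((-(q : ℤ) : ℤ) : ℂ) * (2 * Real.pi * Complex.I) +
        -(2 * Real.pi * Complex.I) * ((r : ℕ) : ℂ) / (n : ℂ) := by
    push_cast
    field_simp
    ring
  rw [key, Complex.exp_add, Complex.exp_int_mul_two_pi_mul_I, one_mul]

/-- The character value `exp(-2πi N / n)` only depends on `N` mod `n`. -/
lemma exp_natCast_eq (n : ℕ) [NeZero n] (N : ℕ) :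
    Complex.exp (-(2 * Real.pi * Complex.I) * (N : ℂ) / (n : ℂ)) =
      Complex.exp (-(2 * Real.pi * Complex.I) * (((N : ZMod n)).val : ℂ) / (n : ℂ)) := by
  have hn : (n : ℂ) ≠ 0 := Nat.cast_ne_zero.2 (NeZero.ne n)
  rw [ZMod.val_natCast]
  conv_lhs => rw [← Nat.div_add_mod N n]
  exact exp_helper n (N / n) (N % n) hn

/-- The Fourier kernel expressed via the `ZMod n` dot product. -/
lemma fourOp_eq (n : ℕ) [NeZero n] :
    fourOp n = Matrix.mulVecLin (Matrix.of fun ℓ k : Fin 2 → ZMod n =>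
      (n : ℂ)⁻¹ * Complex.exp (-(2 * Real.pi * Complex.I) *
        (((dotProduct k ℓ : ZMod n)).val : ℂ) / (n : ℂ))) := by
  unfold fourOp
  congr 1
  ext ℓ k
  simp only [Matrix.of_apply]
  rw [exp_natCast_eq]
  congr 3
  push_cast
  simp [dotProduct, Fin.sum_univ_two, ZMod.natCast_val, ZMod.cast_id]

/-- The key conjugation property: `Fₙ ρₙ(g) = ρₙ(h) Fₙ` when `h = (gᵀ)⁻¹`. -/
lemma four_conj (n : ℕ) [NeZero n] (g h : SL2Z)
    (h1 : Matrix.transpose (g : Matrix (Fin 2) (Fin 2) ℤ) * (h : Matrix (Fin 2) (Fin 2) ℤ) = 1)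
    (h2 : (h : Matrix (Fin 2) (Fin 2) ℤ) * Matrix.transpose (g : Matrix (Fin 2) (Fin 2) ℤ) = 1) :
    fourOp n * repN n g = repN n h * fourOp n := by
  have hn : (n : ℂ) ≠ 0 := Nat.cast_ne_zero.2 (NeZero.ne n)
  set A : Matrix (Fin 2) (Fin 2) (ZMod n) := ((redMap n g : Matrix.SpecialLinearGroup (Fin 2) (ZMod n)) : Matrix (Fin 2) (Fin 2) (ZMod n)) with hA
  set B : Matrix (Fin 2) (Fin 2) (ZMod n) := ((redMap n g⁻¹ : Matrix.SpecialLinearGroup (Fin 2) (ZMod n)) : Matrix (Fin 2) (Fin 2) (ZMod n)) with hB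
  set C : Matrix (Fin 2) (Fin 2) (ZMod n) := ((redMap n h⁻¹ : Matrix.SpecialLinearGroup (Fin 2) (ZMod n)) : Matrix (Fin 2) (Fin 2) (ZMod n)) with hC
  set H : Matrix (Fin 2) (Fin 2) (ZMod n) := ((redMap n h : Matrix.SpecialLinearGroup (Fin 2) (ZMod n)) : Matrix (Fin 2) (Fin 2) (ZMod n)) with hH
  -- basic inverse facts
  have hAB : A * B = 1 := by
    rw [hA, hB, ← Matrix.SpecialLinearGroup.coe_mul, ← map_mul, mul_inv_cancel, map_one,
      Matrix.SpecialLinearGroup.coe_one]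
  have hBA : B * A = 1 := by
    rw [hA, hB, ← Matrix.SpecialLinearGroup.coe_mul, ← map_mul, inv_mul_cancel, map_one,
      Matrix.SpecialLinearGroup.coe_one]
  have hCH : C * H = 1 := by
    rw [hC, hH, ← Matrix.SpecialLinearGroup.coe_mul, ← map_mul, inv_mul_cancel, map_one,
      Matrix.SpecialLinearGroup.coe_one]
  -- C = Aᵀ
  have hAmap : A = (g : Matrix (Fin 2) (Fin 2) ℤ).map (Int.castRingHom (ZMod n)) := rfl
  have hHmap : H = (h : Matrix (Fin 2) (Fin 2) ℤ).map (Int.castRingHom (ZMod n)) := rfl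
  have hHAt : H * Matrix.transpose A = 1 := by
    rw [hAmap, hHmap, ← Matrix.transpose_map, ← Matrix.map_mul, h2, Matrix.map_one _
      (map_zero _) (map_one _)]
  have hCAt : C = Matrix.transpose A := by
    calc C = C * (H * Matrix.transpose A) := by rw [hHAt, mul_one]
    _ = (C * H) * Matrix.transpose A := by rw [mul_assoc]
    _ = Matrix.transpose A := by rw [hCH, one_mul]
  -- reindex the left-hand sum by the bijection x ↦ B x
  have hbij : Function.Bijective (fun x : Fin 2 → ZMod n => Matrix.mulVec B x) := by
    refine Function.bijective_iff_has_inverse.2 ⟨fun x => Matrix.mulVec A x, fun x => ?_, fun x => ?_⟩ <;>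
      simp only [Matrix.mulVec_mulVec, hAB, hBA, Matrix.one_mulVec]
  rw [fourOp_eq]
  refine LinearMap.ext fun f => funext fun ℓ => ?_
  have lhs_eq : (Matrix.mulVecLin (Matrix.of fun ℓ k : Fin 2 → ZMod n =>
      (n : ℂ)⁻¹ * Complex.exp (-(2 * Real.pi * Complex.I) *
        (((dotProduct k ℓ : ZMod n)).val : ℂ) / (n : ℂ))) * repN n g) f ℓ =
      ∑ k : Fin 2 → ZMod n, ((n : ℂ)⁻¹ * Complex.exp (-(2 * Real.pi * Complex.I) *
        (((dotProduct k ℓ : ZMod n)).val : ℂ) / (n : ℂ))) * f (Matrix.mulVec B k) := by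
    simp [Module.End.mul_apply, Matrix.mulVecLin_apply, Matrix.mulVec, dotProduct,
      repN, LinearMap.funLeft_apply, hB]
  have rhs_eq : (repN n h * Matrix.mulVecLin (Matrix.of fun ℓ k : Fin 2 → ZMod n =>
      (n : ℂ)⁻¹ * Complex.exp (-(2 * Real.pi * Complex.I) *
        (((dotProduct k ℓ : ZMod n)).val : ℂ) / (n : ℂ)))) f ℓ =
      ∑ k : Fin 2 → ZMod n, ((n : ℂ)⁻¹ * Complex.exp (-(2 * Real.pi * Complex.I) *
        (((dotProduct k (Matrix.mulVec C ℓ) : ZMod n)).val : ℂ) / (n : ℂ))) * f k := by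
    simp [Module.End.mul_apply, Matrix.mulVecLin_apply, Matrix.mulVec, dotProduct,
      repN, LinearMap.funLeft_apply, hC]
  rw [lhs_eq, rhs_eq]
  refine Fintype.sum_bijective _ hbij _ _ fun x => ?_
  have hdot : dotProduct (Matrix.mulVec B x) (Matrix.mulVec C ℓ) =
      dotProduct x ℓ := by
    rw [hCAt, Matrix.mulVec_transpose, dotProduct_comm, Matrix.dotProduct_mulVec,
      Matrix.vecMul_vecMul, hAB, Matrix.vecMul_one]
    exact dotProduct_comm ℓ x
  simp only [hdot]

/-- On h(n): Fₙ∘j(n) = j(n)∘Fₙ, Fₙ∘b(n) = b(n)∘Fₙ, and j(n)∘Fₙ commutes with t(n). -/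
theorem fourier_commutation (n : ℕ) [NeZero n] :
    fourOp n * jOp n = jOp n * fourOp n ∧
    fourOp n * bOp n = bOp n * fourOp n ∧
    (jOp n * fourOp n) * tOp n = tOp n * (jOp n * fourOp n) := by
  have hJ : fourOp n * jOp n = jOp n * fourOp n := by
    rw [jOp]
    exact four_conj n Jmat Jmat (by simp [Jmat, Matrix.SpecialLinearGroup.coe_mul] <;> decide) (by simp [Jmat, Matrix.SpecialLinearGroup.coe_mul] <;> decide)
  refine ⟨hJ, ?_, ?_⟩
  · -- the b(n) commutation
    have e1 : fourOp n * repN n Imat = repN n Imat * fourOp n :=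
      four_conj n Imat Imat (by simp [Imat, Matrix.SpecialLinearGroup.coe_mul] <;> decide) (by simp [Imat, Matrix.SpecialLinearGroup.coe_mul] <;> decide)
    have e2 : fourOp n * repN n (Rmat' * Lmat) = repN n (Lmat * Rmat') * fourOp n :=
      four_conj n _ _ (by simp [Lmat, Rmat', Matrix.SpecialLinearGroup.coe_mul] <;> decide) (by simp [Lmat, Rmat', Matrix.SpecialLinearGroup.coe_mul] <;> decide)
    have e3 : fourOp n * repN n (Lmat' * Rmat) = repN n (Rmat * Lmat') * fourOp n :=
      four_conj n _ _ (by simp [Rmat, Lmat', Matrix.SpecialLinearGroup.coe_mul] <;> decide) (by simp [Rmat, Lmat', Matrix.SpecialLinearGroup.coe_mul] <;> decide)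
    have e4 : fourOp n * repN n (Lmat * Rmat') = repN n (Rmat' * Lmat) * fourOp n :=
      four_conj n _ _ (by simp [Lmat, Rmat', Matrix.SpecialLinearGroup.coe_mul] <;> decide) (by simp [Lmat, Rmat', Matrix.SpecialLinearGroup.coe_mul] <;> decide)
    have e5 : fourOp n * repN n (Rmat * Lmat') = repN n (Lmat' * Rmat) * fourOp n :=
      four_conj n _ _ (by simp [Rmat, Lmat', Matrix.SpecialLinearGroup.coe_mul] <;> decide) (by simp [Rmat, Lmat', Matrix.SpecialLinearGroup.coe_mul] <;> decide)
    rw [bOp, Lmat_inv, Rmat_inv, ← repN_mul, ← repN_mul, ← repN_mul, ← repN_mul]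
    rw [mul_smul_comm, smul_mul_assoc]
    congr 1
    rw [mul_sub, mul_sub, mul_sub, mul_sub, sub_mul, sub_mul, sub_mul, sub_mul]
    rw [e1, e2, e3, e4, e5]
    abel
  · -- the t(n) commutation
    have kL : fourOp n * repN n Lmat = repN n Rmat' * fourOp n :=
      four_conj n _ _ (by simp [Lmat, Rmat', Matrix.SpecialLinearGroup.coe_mul] <;> decide) (by simp [Lmat, Rmat', Matrix.SpecialLinearGroup.coe_mul] <;> decide)
    have kR : fourOp n * repN n Rmat = repN n Lmat' * fourOp n :=
      four_conj n _ _ (by simp [Rmat, Lmat', Matrix.SpecialLinearGroup.coe_mul] <;> decide) (by simp [Rmat, Lmat', Matrix.SpecialLinearGroup.coe_mul] <;> decide)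
    have gL : Jmat * Rmat' = Lmat * Jmat := Subtype.ext (by simp [Jmat, Rmat', Lmat] <;> decide)
    have gR : Jmat * Lmat' = Rmat * Jmat := Subtype.ext (by simp [Jmat, Lmat', Rmat] <;> decide)
    have cL : (jOp n * fourOp n) * repN n Lmat = repN n Lmat * (jOp n * fourOp n) := by
      rw [mul_assoc, kL, jOp, ← mul_assoc, ← repN_mul, gL, repN_mul, mul_assoc]
    have cR : (jOp n * fourOp n) * repN n Rmat = repN n Rmat * (jOp n * fourOp n) := by
      rw [mul_assoc, kR, jOp, ← mul_assoc, ← repN_mul, gR, repN_mul, mul_assoc]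
    rw [tOp, mul_smul_comm, smul_mul_assoc, mul_add, add_mul, cL, cR]
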